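/- For every real p with 0 ≤ p < 1/2 and every ε with 0 < ε ≤ 1 − 2p, there exists a constant C > 0 such that for all Ξ ∈ ℝ³ and all real a ≥ 1: ∫_{ℝ³} |ξ|^{-1} · (|Ξ−ξ|² + |ξ| + a)^{2p−2} dξ ≤ C · a^{2p−1+ε}. -/

import Mathlib

open MeasureTheory

open Metric Set Real

open scoped ENNReal

set_option maxHeartbeats 1000000

lemma aux_ball {t : ℝ} (ht : 0 < t) (ht3 : t < 3) :
    ∫⁻ x : EuclideanSpace ℝ (Fin 3) in ball 0 1, ENNReal.ofReal (‖x‖ ^ (-t)) < ∞ := by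
  set μ := (volume : Measure (EuclideanSpace ℝ (Fin 3))).restrict (ball 0 1) with hμ
  have hmeas : Measurable fun x : EuclideanSpace ℝ (Fin 3) => ‖x‖ ^ (-t) := by fun_prop
  rw [show (∫⁻ x : EuclideanSpace ℝ (Fin 3) in ball 0 1, ENNReal.ofReal (‖x‖ ^ (-t)))
      = ∫⁻ x, ENNReal.ofReal (‖x‖ ^ (-t)) ∂μ from rfl,
    lintegral_eq_lintegral_meas_le μ
      (ae_of_all _ fun x => rpow_nonneg (norm_nonneg x) _) hmeas.aemeasurable]
  calc ∫⁻ s in Ioi 0, μ {a | s ≤ ‖a‖ ^ (-t)}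
      ≤ ∫⁻ s in Ioc 0 1 ∪ Ioi 1, μ {a | s ≤ ‖a‖ ^ (-t)} :=
        lintegral_mono_set Ioi_subset_Ioc_union_Ioi
    _ ≤ (∫⁻ s in Ioc 0 1, μ {a | s ≤ ‖a‖ ^ (-t)}) + ∫⁻ s in Ioi 1, μ {a | s ≤ ‖a‖ ^ (-t)} :=
        lintegral_union_le _ _ _
    _ < ∞ := by
        refine ENNReal.add_lt_top.2 ⟨?_, ?_⟩
        · calc ∫⁻ s in Ioc 0 1, μ {a | s ≤ ‖a‖ ^ (-t)}
              ≤ ∫⁻ _ in Ioc (0:ℝ) 1, volume (ball (0 : EuclideanSpace ℝ (Fin 3)) 1) := by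
                refine lintegral_mono fun s => ?_
                calc μ {a | s ≤ ‖a‖ ^ (-t)} ≤ μ univ := measure_mono (subset_univ _)
                  _ ≤ volume (ball (0 : EuclideanSpace ℝ (Fin 3)) 1) := by
                      rw [hμ, Measure.restrict_apply_univ]
            _ < ∞ := by
                rw [setLIntegral_const]
                exact ENNReal.mul_lt_top measure_ball_lt_top (by simp)
        · have hbd : ∀ s ∈ Ioi (1:ℝ), μ {a | s ≤ ‖a‖ ^ (-t)}
              ≤ ENNReal.ofReal (s ^ (-(3/t))) *
                volume (closedBall (0 : EuclideanSpace ℝ (Fin 3)) 1) := by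
            intro s hs
            have hs1 : (1:ℝ) < s := hs
            have hs0 : (0:ℝ) < s := by linarith
            have hsub : {a : EuclideanSpace ℝ (Fin 3) | s ≤ ‖a‖ ^ (-t)} ⊆
                closedBall 0 (s ^ (-t⁻¹)) := by
              intro a ha
              simp only [mem_setOf_eq] at ha
              have ha0 : a ≠ 0 := by
                rintro rfl
                rw [norm_zero, zero_rpow (by linarith : -t ≠ 0)] at ha; linarith
              have hna : 0 < ‖a‖ := norm_pos_iff.2 ha0
              rw [mem_closedBall_zero_iff]
              calc ‖a‖ = (‖a‖ ^ (-t)) ^ (-t⁻¹) := by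
                    rw [← Real.rpow_mul (norm_nonneg a),
                      show (-t) * (-t⁻¹) = 1 by field_simp, Real.rpow_one]
                _ ≤ s ^ (-t⁻¹) := by
                    apply Real.rpow_le_rpow_of_nonpos hs0 ha
                    simp [inv_nonneg, ht.le]
            calc μ {a | s ≤ ‖a‖ ^ (-t)}
                ≤ volume {a : EuclideanSpace ℝ (Fin 3) | s ≤ ‖a‖ ^ (-t)} :=
                  Measure.restrict_le_self _
              _ ≤ volume (closedBall (0 : EuclideanSpace ℝ (Fin 3)) (s ^ (-t⁻¹))) :=
                  measure_mono hsub
              _ = ENNReal.ofReal ((s ^ (-t⁻¹)) ^ Module.finrank ℝ (EuclideanSpace ℝ (Fin 3))) *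
                    volume (ball (0 : EuclideanSpace ℝ (Fin 3)) 1) :=
                  Measure.addHaar_closedBall _ _ (by positivity)
              _ = ENNReal.ofReal (s ^ (-(3/t))) *
                    volume (ball (0 : EuclideanSpace ℝ (Fin 3)) 1) := by
                  congr 2
                  rw [show Module.finrank ℝ (EuclideanSpace ℝ (Fin 3)) = 3 by simp,
                    ← Real.rpow_natCast (s ^ (-t⁻¹)) 3, ← Real.rpow_mul hs0.le]
                  norm_num
                  rw [div_eq_mul_inv, mul_comm]
              _ ≤ ENNReal.ofReal (s ^ (-(3/t))) *
                    volume (closedBall (0 : EuclideanSpace ℝ (Fin 3)) 1) := by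
                  exact mul_le_mul_right (measure_mono ball_subset_closedBall) _
          calc ∫⁻ s in Ioi 1, μ {a | s ≤ ‖a‖ ^ (-t)}
              ≤ ∫⁻ s in Ioi 1, ENNReal.ofReal (s ^ (-(3/t))) *
                  volume (closedBall (0 : EuclideanSpace ℝ (Fin 3)) 1) :=
                setLIntegral_mono' measurableSet_Ioi hbd
            _ = (∫⁻ s in Ioi 1, ENNReal.ofReal (s ^ (-(3/t)))) *
                  volume (closedBall (0 : EuclideanSpace ℝ (Fin 3)) 1) :=
                lintegral_mul_const' _ _ measure_closedBall_lt_top.ne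
            _ < ∞ := by
                refine ENNReal.mul_lt_top ?_ measure_closedBall_lt_top
                refine IntegrableOn.setLIntegral_lt_top ?_
                refine integrableOn_Ioi_rpow_of_lt ?_ one_pos
                rw [neg_lt_neg_iff, lt_div_iff₀ ht]
                linarith

lemma aux_F {m : ℝ} (hm : 3/2 < m) :
    ∫⁻ η : EuclideanSpace ℝ (Fin 3), ENNReal.ofReal ((1 + ‖η‖ ^ 2) ^ (-m)) < ∞ := by
  have hm0 : 0 < m := by linarith
  have hpt : ∀ η : EuclideanSpace ℝ (Fin 3),
      (1 + ‖η‖ ^ 2) ^ (-m) ≤ 2 ^ m * (1 + ‖η‖) ^ (-(2*m)) := by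
    intro η
    have h1 : (0:ℝ) < (1 + ‖η‖) ^ 2 / 2 := by positivity
    have h2 : (1 + ‖η‖) ^ 2 / 2 ≤ 1 + ‖η‖ ^ 2 := by nlinarith [sq_nonneg (1 - ‖η‖)]
    calc (1 + ‖η‖ ^ 2) ^ (-m) ≤ ((1 + ‖η‖) ^ 2 / 2) ^ (-m) :=
          Real.rpow_le_rpow_of_nonpos h1 h2 (by linarith)
      _ = 2 ^ m * (1 + ‖η‖) ^ (-(2*m)) := by
          rw [div_rpow (by positivity) (by norm_num), ← Real.rpow_natCast (1+‖η‖) 2,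
            ← Real.rpow_mul (by positivity), div_eq_mul_inv, ← Real.rpow_neg (by norm_num : (0:ℝ) ≤ 2)]
          push_cast
          ring_nf
  calc ∫⁻ η : EuclideanSpace ℝ (Fin 3), ENNReal.ofReal ((1 + ‖η‖ ^ 2) ^ (-m))
      ≤ ∫⁻ η : EuclideanSpace ℝ (Fin 3),
          ENNReal.ofReal (2 ^ m) * ENNReal.ofReal ((1 + ‖η‖) ^ (-(2*m))) := by
        refine lintegral_mono fun η => ?_
        rw [← ENNReal.ofReal_mul (by positivity)]
        exact ENNReal.ofReal_le_ofReal (hpt η)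
    _ = ENNReal.ofReal (2 ^ m) *
          ∫⁻ η : EuclideanSpace ℝ (Fin 3), ENNReal.ofReal ((1 + ‖η‖) ^ (-(2*m))) :=
        lintegral_const_mul' _ _ ENNReal.ofReal_ne_top
    _ < ∞ := by
        refine ENNReal.mul_lt_top ENNReal.ofReal_lt_top ?_
        refine finite_integral_one_add_norm ?_
        rw [show Module.finrank ℝ (EuclideanSpace ℝ (Fin 3)) = 3 by simp]
        push_cast; linarith

lemma aux_G {b c : ℝ} (hb0 : 0 < b) (hb3 : b < 3) (hc : 0 ≤ c) (hbc : 3 < b + c) :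
    ∫⁻ ξ : EuclideanSpace ℝ (Fin 3),
      ENNReal.ofReal (‖ξ‖ ^ (-b) * (1 + ‖ξ‖) ^ (-c)) < ∞ := by
  rw [← lintegral_add_compl (μ := volume)
    (fun ξ : EuclideanSpace ℝ (Fin 3) => ENNReal.ofReal (‖ξ‖ ^ (-b) * (1 + ‖ξ‖) ^ (-c)))
    (measurableSet_ball (x := (0 : EuclideanSpace ℝ (Fin 3))) (ε := 1))]
  refine ENNReal.add_lt_top.2 ⟨?_, ?_⟩
  · calc ∫⁻ ξ in ball (0 : EuclideanSpace ℝ (Fin 3)) 1,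
          ENNReal.ofReal (‖ξ‖ ^ (-b) * (1 + ‖ξ‖) ^ (-c))
        ≤ ∫⁻ ξ in ball (0 : EuclideanSpace ℝ (Fin 3)) 1, ENNReal.ofReal (‖ξ‖ ^ (-b)) := by
          refine lintegral_mono fun ξ => ENNReal.ofReal_le_ofReal ?_
          refine mul_le_of_le_one_right (by positivity) ?_
          exact Real.rpow_le_one_of_one_le_of_nonpos (by simp [norm_nonneg]) (by linarith)
      _ < ∞ := aux_ball hb0 hb3
  · calc ∫⁻ ξ in (ball (0 : EuclideanSpace ℝ (Fin 3)) 1)ᶜ,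
          ENNReal.ofReal (‖ξ‖ ^ (-b) * (1 + ‖ξ‖) ^ (-c))
        ≤ ∫⁻ ξ in (ball (0 : EuclideanSpace ℝ (Fin 3)) 1)ᶜ,
            ENNReal.ofReal (2 ^ b) * ENNReal.ofReal ((1 + ‖ξ‖) ^ (-(b+c))) := by
          refine setLIntegral_mono' (measurableSet_ball.compl) fun ξ hξ => ?_
          have h1 : (1:ℝ) ≤ ‖ξ‖ := by
            simpa [mem_ball, dist_zero_right] using hξ
          rw [← ENNReal.ofReal_mul (by positivity)]
          refine ENNReal.ofReal_le_ofReal ?_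
          have hnorm : (1 + ‖ξ‖) / 2 ≤ ‖ξ‖ := by linarith
          have key : ‖ξ‖ ^ (-b) ≤ 2 ^ b * (1 + ‖ξ‖) ^ (-b) := by
            calc ‖ξ‖ ^ (-b) ≤ ((1 + ‖ξ‖) / 2) ^ (-b) :=
                Real.rpow_le_rpow_of_nonpos (by positivity) hnorm (by linarith)
              _ = 2 ^ b * (1 + ‖ξ‖) ^ (-b) := by
                rw [div_rpow (by positivity) (by norm_num), div_eq_mul_inv,
                  ← Real.rpow_neg (by norm_num : (0:ℝ) ≤ 2)]
                ring_nf
          calc ‖ξ‖ ^ (-b) * (1 + ‖ξ‖) ^ (-c)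
              ≤ (2 ^ b * (1 + ‖ξ‖) ^ (-b)) * (1 + ‖ξ‖) ^ (-c) := by
                refine mul_le_mul_of_nonneg_right key (by positivity)
            _ = 2 ^ b * (1 + ‖ξ‖) ^ (-(b+c)) := by
                rw [mul_assoc, ← Real.rpow_add (by positivity)]
                ring_nf
      _ ≤ ∫⁻ ξ : EuclideanSpace ℝ (Fin 3),
            ENNReal.ofReal (2 ^ b) * ENNReal.ofReal ((1 + ‖ξ‖) ^ (-(b+c))) :=
          setLIntegral_le_lintegral _ _
      _ = ENNReal.ofReal (2 ^ b) *
            ∫⁻ ξ : EuclideanSpace ℝ (Fin 3), ENNReal.ofReal ((1 + ‖ξ‖) ^ (-(b+c))) :=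
          lintegral_const_mul' _ _ ENNReal.ofReal_ne_top
      _ < ∞ := by
          refine ENNReal.mul_lt_top ENNReal.ofReal_lt_top ?_
          refine finite_integral_one_add_norm ?_
          rw [show Module.finrank ℝ (EuclideanSpace ℝ (Fin 3)) = 3 by simp]
          push_cast; linarith

/-- For `0 ≤ p < 1/2` and `0 < ε ≤ 1 - 2p` there is `C > 0` such that for all `Ξ ∈ ℝ³` and
`a ≥ 1`: `∫ |ξ|⁻¹ (|Ξ-ξ|² + |ξ| + a)^(2p-2) dξ ≤ C a^(2p-1+ε)`. -/
theorem stmt_8 (p ε : ℝ) (hp0 : 0 ≤ p) (hp : p < 1 / 2) (hε : 0 < ε) (hε' : ε ≤ 1 - 2 * p) :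
    ∃ C > 0, ∀ (Ξ : EuclideanSpace ℝ (Fin 3)) (a : ℝ), 1 ≤ a →
      (∫ ξ : EuclideanSpace ℝ (Fin 3),
          ‖ξ‖⁻¹ * (‖Ξ - ξ‖ ^ 2 + ‖ξ‖ + a) ^ (2 * p - 2)) ≤
        C * a ^ (2 * p - 1 + ε) := by
  have hε1 : ε ≤ 1 := by linarith
  set e := 2*ε/5 with he_def
  have he0 : 0 < e := by rw [he_def]; linarith
  have he25 : e ≤ 2/5 := by rw [he_def]; linarith
  have hep : 5*e/4 ≤ 1/2 - p := by rw [he_def]; linarith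
  have h1e : (0:ℝ) < 1 - e := by linarith
  have h12e : (0:ℝ) < 1 + 2*e := by linarith
  set q' := 3/(1+2*e) with hq'_def
  set q := 3/(2*(1-e)) with hq_def
  have hq'1 : 1 < q' := by rw [hq'_def, lt_div_iff₀ h12e]; linarith
  have hq1 : 1 < q := by rw [hq_def, lt_div_iff₀ (by linarith)]; linarith
  have hq0 : (0:ℝ) < q := by linarith
  have hq'0 : (0:ℝ) < q' := by linarith
  have hq'3 : q' < 3 := by rw [hq'_def, div_lt_iff₀ h12e]; linarith
  have hconj : q'.HolderConjugate q := by
    constructor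
    · rw [hq'_def, hq_def]
      field_simp
      ring
    · exact hq'0
    · exact hq0
  set s₁ := 1 - e/2 with hs₁_def
  set c := 9*e/4 with hc_def
  set θ' := 1/2 - p - e/2 with hθ'_def
  set u' := 1/2 - p - 5*e/4 with hu'_def
  have hs₁0 : (0:ℝ) < s₁ := by rw [hs₁_def]; linarith
  have hc0 : (0:ℝ) < c := by rw [hc_def]; linarith
  have hθ'0 : (0:ℝ) ≤ θ' := by rw [hθ'_def]; linarith
  have hu'0 : (0:ℝ) ≤ u' := by rw [hu'_def]; linarith
  -- the two reference functions
  set G : EuclideanSpace ℝ (Fin 3) → ℝ := fun ξ => ‖ξ‖⁻¹ * (1+‖ξ‖) ^ (-c) with hG_def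
  set F : EuclideanSpace ℝ (Fin 3) → ℝ := fun η => (1+‖η‖^2) ^ (-s₁) with hF_def
  have hGnn : ∀ ξ, 0 ≤ G ξ := fun ξ => by simp only [hG_def]; positivity
  have hFnn : ∀ η, 0 ≤ F η := fun η => by simp only [hF_def]; positivity
  have hGmeas : Measurable G := by
    simp only [hG_def]
    apply Measurable.mul
    · exact measurable_norm.inv
    · apply Continuous.measurable
      apply Continuous.rpow_const (continuous_const.add continuous_norm)
      intro x; left; simp only [Pi.add_apply, Pi.pow_apply]; positivity
  have hFmeas : Measurable F := by
    simp only [hF_def]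
    apply Continuous.measurable
    apply Continuous.rpow_const (continuous_const.add (continuous_norm.pow 2))
    intro x; left; simp only [Pi.add_apply, Pi.pow_apply]; positivity
  set g : EuclideanSpace ℝ (Fin 3) → ℝ≥0∞ := fun ξ => ENNReal.ofReal (G ξ) with hg_def
  set f : EuclideanSpace ℝ (Fin 3) → ℝ≥0∞ := fun η => ENNReal.ofReal (F η) with hf_def
  have hgmeas : Measurable g := ENNReal.measurable_ofReal.comp hGmeas
  have hfmeas : Measurable f := ENNReal.measurable_ofReal.comp hFmeas
  -- finiteness of the `q'`-integral of `g`
  have hGint : ∫⁻ ξ, g ξ ^ q' < ∞ := by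
    have heq : ∀ ξ : EuclideanSpace ℝ (Fin 3),
        g ξ ^ q' = ENNReal.ofReal (‖ξ‖ ^ (-q') * (1+‖ξ‖) ^ (-(c*q'))) := by
      intro ξ
      simp only [hg_def, hG_def]
      rw [ENNReal.ofReal_rpow_of_nonneg (by positivity) hq'0.le]
      congr 1
      rw [Real.mul_rpow (by positivity) (by positivity),
        Real.inv_rpow (norm_nonneg ξ), ← Real.rpow_neg (norm_nonneg ξ),
        ← Real.rpow_mul (by positivity : (0:ℝ) ≤ 1+‖ξ‖), neg_mul]
    rw [lintegral_congr heq]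
    refine aux_G hq'0 hq'3 (by positivity) ?_
    have heq2 : q' + c*q' = 3*(1+9*e/4)/(1+2*e) := by
      rw [hq'_def, hc_def]; field_simp
    rw [heq2, lt_div_iff₀ h12e]; linarith
  -- finiteness of the `q`-integral of `f`
  have hFint : ∫⁻ η, f η ^ q < ∞ := by
    have heq : ∀ η : EuclideanSpace ℝ (Fin 3),
        f η ^ q = ENNReal.ofReal ((1 + ‖η‖ ^ 2) ^ (-(s₁*q))) := by
      intro η
      simp only [hf_def, hF_def]
      rw [ENNReal.ofReal_rpow_of_nonneg (by positivity) hq0.le]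
      congr 1
      rw [← Real.rpow_mul (by positivity : (0:ℝ) ≤ 1+‖η‖^2), neg_mul]
    rw [lintegral_congr heq]
    refine aux_F ?_
    have heq2 : s₁ * q = 3*(1-e/2)/(2*(1-e)) := by
      rw [hs₁_def, hq_def]; field_simp
    rw [heq2, lt_div_iff₀ (by linarith)]; linarith
  set Kg := (∫⁻ ξ, g ξ ^ q') ^ (1/q') with hKg_def
  set Kf := (∫⁻ η, f η ^ q) ^ (1/q) with hKf_def
  have hKg : Kg < ∞ := by
    rw [hKg_def]
    exact ENNReal.rpow_lt_top_of_nonneg (by positivity) hGint.ne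
  have hKf : Kf < ∞ := by
    rw [hKf_def]
    exact ENNReal.rpow_lt_top_of_nonneg (by positivity) hFint.ne
  refine ⟨(Kg * Kf).toReal + 1, by positivity, ?_⟩
  intro Ξ a ha
  have ha0 : (0:ℝ) < a := by linarith
  -- the pointwise bound
  have hpoint : ∀ ξ : EuclideanSpace ℝ (Fin 3),
      ‖ξ‖⁻¹ * (‖Ξ - ξ‖ ^ 2 + ‖ξ‖ + a) ^ (2 * p - 2) ≤
        a ^ (-θ'-u') * (G ξ * F (Ξ - ξ)) := by
    intro ξ
    set X := ‖Ξ - ξ‖ with hX_def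
    set r := ‖ξ‖ with hr_def
    have hX0 : 0 ≤ X := norm_nonneg _
    have hr0 : 0 ≤ r := norm_nonneg _
    have hB : (0:ℝ) < X^2 + r + a := by have := sq_nonneg X; linarith
    have hsplit : (X^2 + r + a) ^ (2*p-2) =
        (X^2+r+a) ^ (-s₁) * ((X^2+r+a) ^ (-θ') * ((X^2+r+a) ^ (-c) * (X^2+r+a) ^ (-u'))) := by
      rw [← Real.rpow_add hB, ← Real.rpow_add hB, ← Real.rpow_add hB]
      congr 1
      rw [hs₁_def, hθ'_def, hc_def, hu'_def]
      ring
    have h1 : (X^2+r+a) ^ (-s₁) ≤ (1+X^2) ^ (-s₁) :=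
      Real.rpow_le_rpow_of_nonpos (by positivity) (by linarith) (by linarith)
    have h2 : (X^2+r+a) ^ (-θ') ≤ a ^ (-θ') :=
      Real.rpow_le_rpow_of_nonpos ha0 (by have := sq_nonneg X; linarith) (by linarith)
    have h3 : (X^2+r+a) ^ (-c) ≤ (1+r) ^ (-c) :=
      Real.rpow_le_rpow_of_nonpos (by positivity) (by have := sq_nonneg X; linarith) (by linarith)
    have h4 : (X^2+r+a) ^ (-u') ≤ a ^ (-u') :=
      Real.rpow_le_rpow_of_nonpos ha0 (by have := sq_nonneg X; linarith) (by linarith)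
    have hprod : (X^2 + r + a) ^ (2*p-2) ≤
        (1+X^2) ^ (-s₁) * (a ^ (-θ') * ((1+r) ^ (-c) * a ^ (-u'))) := by
      rw [hsplit]
      have hm1 : (0:ℝ) ≤ (X^2+r+a) ^ (-θ') := Real.rpow_nonneg hB.le _
      have hm2 : (0:ℝ) ≤ (X^2+r+a) ^ (-c) := Real.rpow_nonneg hB.le _
      have hm3 : (0:ℝ) ≤ (X^2+r+a) ^ (-u') := Real.rpow_nonneg hB.le _
      refine mul_le_mul h1 ?_ (by positivity) (by positivity)
      refine mul_le_mul h2 ?_ (by positivity) (by positivity)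
      exact mul_le_mul h3 h4 hm3 (by positivity)
    calc ‖ξ‖⁻¹ * (X ^ 2 + r + a) ^ (2 * p - 2)
        ≤ r⁻¹ * ((1+X^2) ^ (-s₁) * (a ^ (-θ') * ((1+r) ^ (-c) * a ^ (-u')))) := by
          rw [← hr_def]
          exact mul_le_mul_of_nonneg_left hprod (by positivity)
      _ = a ^ (-θ'-u') * (G ξ * F (Ξ - ξ)) := by
          simp only [hG_def, hF_def, ← hr_def, ← hX_def]
          rw [sub_eq_add_neg, Real.rpow_add ha0]
          ring
  -- measurability and nonnegativity of the integrand
  have hInn : ∀ ξ : EuclideanSpace ℝ (Fin 3),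
      0 ≤ ‖ξ‖⁻¹ * (‖Ξ - ξ‖ ^ 2 + ‖ξ‖ + a) ^ (2 * p - 2) := by
    intro ξ
    have : (0:ℝ) ≤ ‖Ξ - ξ‖ ^ 2 + ‖ξ‖ + a := by nlinarith [sq_nonneg ‖Ξ - ξ‖, norm_nonneg ξ]
    exact mul_nonneg (by positivity) (Real.rpow_nonneg this _)
  have hImeas : Measurable fun ξ : EuclideanSpace ℝ (Fin 3) =>
      ‖ξ‖⁻¹ * (‖Ξ - ξ‖ ^ 2 + ‖ξ‖ + a) ^ (2 * p - 2) := by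
    apply Measurable.mul
    · exact measurable_norm.inv
    · apply Continuous.measurable
      apply Continuous.rpow_const
      · exact (((continuous_const.sub continuous_id).norm.pow 2).add
          continuous_norm).add continuous_const
      · intro ξ
        left
        have : (0:ℝ) < ‖Ξ - ξ‖ ^ 2 + ‖ξ‖ + a := by nlinarith [sq_nonneg ‖Ξ - ξ‖, norm_nonneg ξ]
        exact this.ne'
  -- the key integral bound (in `ℝ≥0∞`)
  have key : (∫⁻ ξ, ENNReal.ofReal (‖ξ‖⁻¹ * (‖Ξ - ξ‖ ^ 2 + ‖ξ‖ + a) ^ (2 * p - 2))) ≤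
      ENNReal.ofReal (a ^ (-θ'-u')) * (Kg * Kf) := by
    calc (∫⁻ ξ, ENNReal.ofReal (‖ξ‖⁻¹ * (‖Ξ - ξ‖ ^ 2 + ‖ξ‖ + a) ^ (2 * p - 2)))
        ≤ ∫⁻ ξ, ENNReal.ofReal (a ^ (-θ'-u') * (G ξ * F (Ξ - ξ))) :=
          lintegral_mono fun ξ => ENNReal.ofReal_le_ofReal (hpoint ξ)
      _ = ∫⁻ ξ, ENNReal.ofReal (a ^ (-θ'-u')) * (g ξ * f (Ξ - ξ)) := by
          refine lintegral_congr fun ξ => ?_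
          rw [ENNReal.ofReal_mul (Real.rpow_nonneg ha0.le _),
            ENNReal.ofReal_mul (hGnn ξ)]
      _ = ENNReal.ofReal (a ^ (-θ'-u')) * ∫⁻ ξ, g ξ * f (Ξ - ξ) :=
          lintegral_const_mul' _ _ ENNReal.ofReal_ne_top
      _ ≤ ENNReal.ofReal (a ^ (-θ'-u')) *
            ((∫⁻ ξ, g ξ ^ q') ^ (1/q') * (∫⁻ ξ, f (Ξ - ξ) ^ q) ^ (1/q)) := by
          refine mul_le_mul_right ?_ _
          have hsub : Measurable (fun ξ : EuclideanSpace ℝ (Fin 3) => f (Ξ - ξ)) :=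
            hfmeas.comp (measurable_const.sub measurable_id)
          have hH := ENNReal.lintegral_mul_le_Lp_mul_Lq volume hconj hgmeas.aemeasurable
            hsub.aemeasurable
          simpa [Pi.mul_apply] using hH
      _ = ENNReal.ofReal (a ^ (-θ'-u')) * (Kg * Kf) := by
          congr 1
          rw [hKg_def, hKf_def]
          congr 2
          exact (Measure.measurePreserving_sub_left volume Ξ).lintegral_comp
            (hfmeas.pow_const _)
  -- convert to the Bochner integral and finish
  rw [integral_eq_lintegral_of_nonneg_ae (ae_of_all _ hInn) hImeas.aestronglyMeasurable]
  have hfin : ENNReal.ofReal (a ^ (-θ'-u')) * (Kg * Kf) ≠ ∞ :=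
    ENNReal.mul_ne_top ENNReal.ofReal_ne_top (ENNReal.mul_ne_top hKg.ne hKf.ne)
  calc (∫⁻ ξ, ENNReal.ofReal (‖ξ‖⁻¹ * (‖Ξ - ξ‖ ^ 2 + ‖ξ‖ + a) ^ (2 * p - 2))).toReal
      ≤ (ENNReal.ofReal (a ^ (-θ'-u')) * (Kg * Kf)).toReal := ENNReal.toReal_mono hfin key
    _ = a ^ (-θ'-u') * (Kg * Kf).toReal := by
        rw [ENNReal.toReal_mul, ENNReal.toReal_ofReal (Real.rpow_nonneg ha0.le _)]
    _ ≤ a ^ (2*p-1+ε) * ((Kg * Kf).toReal + 1) := by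
        refine mul_le_mul ?_ (by linarith [ENNReal.toReal_nonneg (a := Kg * Kf)]) 
          ENNReal.toReal_nonneg (Real.rpow_nonneg ha0.le _)
        refine Real.rpow_le_rpow_of_exponent_le ha ?_
        rw [hθ'_def, hu'_def, he_def]
        linarith
    _ = ((Kg * Kf).toReal + 1) * a ^ (2 * p - 1 + ε) := by ring
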